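/- arXiv:2506.03891 — 8 statements merged into one kernel-verified Lean document; each statement's English description precedes it below -/
import Mathlib

section
/- Let H be a complex Hilbert space, A a positive bounded self-adjoint operator on H with ‖A‖ ≤ l, and let φ : [0, l] → ℝ be an index function on [0, l]. Then for every α with 0 < α ≤ l, the operator norm of (αI + A)^{-1/2} ∘ φ(A) is at most φ(α)/√α, where φ(A) is defined by the continuous functional calculus applied to A. -/
open ContinuousLinearMap

/-- Lemma 3.3, inequality (norm_forHK) of the paper: for a positive bounded
self-adjoint operator `A` on a complex Hilbert space with `‖A‖ ≤ l`, an index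
function `φ` on `[0, l]` (continuous, strictly increasing, `φ 0 = 0`, with `φ²`
concave), and `0 < α ≤ l`, one has `‖(αI + A)^{-1/2} ∘ φ(A)‖ ≤ φ(α)/√α`,
where `φ(A)` is given by the continuous functional calculus and the inverse
square root is expressed via any positive square root `S` of `αI + A` together
with its inverse `Sinv`. -/
theorem stmt_2 {H : Type*} [NormedAddCommGroup H] [InnerProductSpace ℂ H] [CompleteSpace H]
    (A : H →L[ℂ] H) (l : ℝ) (hl : 0 < l) (hA : A.IsPositive) (hAnorm : ‖A‖ ≤ l)
    (φ : ℝ → ℝ) (hφ_cont : ContinuousOn φ (Set.Icc 0 l))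
    (hφ_mono : StrictMonoOn φ (Set.Icc 0 l)) (hφ0 : φ 0 = 0)
    (hφ_conc : ConcaveOn ℝ (Set.Icc 0 l) (fun t => (φ t) ^ 2))
    (α : ℝ) (hα : 0 < α) (hαl : α ≤ l) :
    ∀ S Sinv : H →L[ℂ] H, S.IsPositive →
      S ∘L S = (α : ℂ) • (1 : H →L[ℂ] H) + A →
      Sinv ∘L S = 1 → S ∘L Sinv = 1 →
      ‖Sinv ∘L cfc φ A‖ ≤ φ α / Real.sqrt α := by
  intro S Sinv hS hSS hSinvS hSSinv
  have hsa : IsSelfAdjoint A := hA.isSelfAdjoint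
  have hφα : 0 < φ α := by
    rw [← hφ0]
    exact hφ_mono ⟨le_refl 0, hl.le⟩ ⟨hα.le, hαl⟩ hα
  have hrhs : 0 ≤ φ α / Real.sqrt α :=
    div_nonneg hφα.le (Real.sqrt_nonneg α)
  rcases subsingleton_or_nontrivial H with hsub | hnt
  · have : Sinv ∘L cfc φ A = 0 := Subsingleton.elim _ _
    rw [this, norm_zero]; exact hrhs
  -- spectrum bounds
  have hA0 : (0:H →L[ℂ] H) ≤ A := (nonneg_iff_isPositive A).2 hA
  have hspec : spectrum ℝ A ⊆ Set.Icc 0 l := by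
    intro t ht
    refine ⟨spectrum_nonneg_of_nonneg (𝕜 := ℝ) hA0 ht, ?_⟩
    calc t ≤ |t| := le_abs_self t
    _ = ‖t‖ := rfl
    _ ≤ ‖A‖ := spectrum.norm_le_norm_of_mem ht
    _ ≤ l := hAnorm
  -- positivity of α + t on spectrum
  have hpos : ∀ t ∈ spectrum ℝ A, 0 < α + t := fun t ht =>
    lt_of_lt_of_le hα (le_add_of_nonneg_right (hspec ht).1)
  have hcont_sqrt : ContinuousOn (fun t : ℝ => Real.sqrt (α + t)) (spectrum ℝ A) :=
    (Real.continuous_sqrt.comp (continuous_const.add continuous_id)).continuousOn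
  have hcont_inv : ContinuousOn (fun t : ℝ => (Real.sqrt (α + t))⁻¹) (spectrum ℝ A) := by
    apply hcont_sqrt.inv₀
    intro t ht
    exact (Real.sqrt_pos.2 (hpos t ht)).ne'
  set R : H →L[ℂ] H := cfc (fun t : ℝ => Real.sqrt (α + t)) A with hR
  set Rinv : H →L[ℂ] H := cfc (fun t : ℝ => (Real.sqrt (α + t))⁻¹) A with hRinv
  have hRR : R * R = (α : ℂ) • (1 : H →L[ℂ] H) + A := by
    rw [hR, ← cfc_mul _ _ A hcont_sqrt hcont_sqrt]
    have : cfc (fun t : ℝ => Real.sqrt (α + t) * Real.sqrt (α + t)) A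
        = cfc (fun t : ℝ => α + t) A := by
      apply cfc_congr
      intro t ht
      exact Real.mul_self_sqrt (hpos t ht).le
    rw [this, cfc_const_add α (fun t : ℝ => t) A, cfc_id' ℝ A]
    congr 1
  have hR0 : (0:H →L[ℂ] H) ≤ R := cfc_nonneg fun t _ => Real.sqrt_nonneg _
  have hS0 : (0:H →L[ℂ] H) ≤ S := (nonneg_iff_isPositive S).2 hS
  have hSR : S = R := by
    set_option synthInstance.maxHeartbeats 1000000 in
    have h1h2 : CFC.sqrt ((α : ℂ) • (1 : H →L[ℂ] H) + A) = S ∧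
        CFC.sqrt ((α : ℂ) • (1 : H →L[ℂ] H) + A) = R :=
      ⟨CFC.sqrt_unique hSS hS0, CFC.sqrt_unique hRR hR0⟩
    rw [← h1h2.1, h1h2.2]

  have hRRinv : R * Rinv = 1 := by
    rw [hR, hRinv, ← cfc_mul _ _ A hcont_sqrt hcont_inv]
    have : cfc (fun t : ℝ => Real.sqrt (α + t) * (Real.sqrt (α + t))⁻¹) A
        = cfc (fun _ : ℝ => (1:ℝ)) A := by
      apply cfc_congr
      intro t ht
      exact mul_inv_cancel₀ (Real.sqrt_pos.2 (hpos t ht)).ne'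
    rw [this, cfc_const 1 A, map_one]
  have hSinvR : Sinv = Rinv := by
    have : Sinv * (R * Rinv) = Sinv := by rw [hRRinv, mul_one]
    calc Sinv = Sinv * (R * Rinv) := this.symm
    _ = (Sinv * S) * Rinv := by rw [hSR, mul_assoc]
    _ = Rinv := by
        have : Sinv * S = 1 := hSinvS
        rw [this, one_mul]
  have hkey : Sinv ∘L cfc φ A
      = cfc (fun t : ℝ => (Real.sqrt (α + t))⁻¹ * φ t) A := by
    have : Sinv ∘L cfc φ A = Rinv * cfc φ A := by rw [hSinvR]; rfl
    rw [this, hRinv, ← cfc_mul _ _ A hcont_inv (hφ_cont.mono hspec)]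
  rw [hkey]
  apply norm_cfc_le hrhs
  intro t ht
  obtain ⟨ht0, htl⟩ := hspec ht
  have hφt : 0 ≤ φ t := by
    rcases eq_or_lt_of_le ht0 with h | h
    · rw [← h, hφ0]
    · rw [← hφ0]; exact (hφ_mono ⟨le_refl 0, hl.le⟩ ⟨ht0, htl⟩ h).le
  have hαt : 0 < α + t := hpos t ht
  have hv : ‖(Real.sqrt (α + t))⁻¹ * φ t‖ = (Real.sqrt (α + t))⁻¹ * φ t := by
    rw [Real.norm_eq_abs, abs_of_nonneg]
    exact mul_nonneg (inv_nonneg.2 (Real.sqrt_nonneg _)) hφt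
  rw [hv]
  -- key scalar inequality
  have hsq : (φ t)^2 * α ≤ (φ α)^2 * (α + t) := by
    rcases le_total t α with h | h
    · have h1 : φ t ≤ φ α := by
        rcases eq_or_lt_of_le h with h' | h'
        · rw [h']
        · exact (hφ_mono ⟨ht0, htl⟩ ⟨hα.le, hαl⟩ h').le
      have h2 : (φ t)^2 ≤ (φ α)^2 := pow_le_pow_left₀ hφt h1 2
      have h3 : (φ t)^2 * α ≤ (φ α)^2 * α := mul_le_mul_of_nonneg_right h2 hα.le
      have h4 : (φ α)^2 * α ≤ (φ α)^2 * (α + t) :=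
        mul_le_mul_of_nonneg_left (by linarith) (sq_nonneg (φ α))
      linarith
    · -- t ≥ α, use concavity: φ(α)² ≥ (α/t) φ(t)²
      have htpos : 0 < t := lt_of_lt_of_le hα h
      have hconc := hφ_conc.2 (Set.mem_Icc.2 ⟨ht0, htl⟩)
        (Set.mem_Icc.2 ⟨le_refl 0, hl.le⟩)
        (show (0:ℝ) ≤ α / t from div_nonneg hα.le htpos.le)
        (show (0:ℝ) ≤ 1 - α / t by rw [sub_nonneg]; exact div_le_one_of_le₀ h htpos.le)
        (by ring)
      have heq : α / t * t + (1 - α / t) * 0 = α := by field_simp; ring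
      simp only [smul_eq_mul, heq, hφ0] at hconc
      norm_num at hconc
      have hconc' : α / t * (φ t)^2 ≤ (φ α)^2 := by linarith [hconc]
      have h3 : (φ t)^2 * α ≤ (φ α)^2 * t := by
        rw [div_mul_eq_mul_div, div_le_iff₀ htpos] at hconc'
        linarith [hconc']
      have h4 : (φ α)^2 * t ≤ (φ α)^2 * (α + t) :=
        mul_le_mul_of_nonneg_left (by linarith) (sq_nonneg (φ α))
      linarith
  -- conclude
  have hL : ((Real.sqrt (α + t))⁻¹ * φ t)^2 ≤ (φ α / Real.sqrt α)^2 := by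
    have e1 : ((Real.sqrt (α + t))⁻¹ * φ t)^2 = (φ t)^2 / (α + t) := by
      rw [mul_pow, inv_pow, Real.sq_sqrt hαt.le]
      ring
    have e2 : (φ α / Real.sqrt α)^2 = (φ α)^2 / α := by
      rw [div_pow, Real.sq_sqrt hα.le]
    rw [e1, e2, div_le_div_iff₀ hαt hα]
    linarith [hsq]
  have hanon : 0 ≤ (Real.sqrt (α + t))⁻¹ * φ t :=
    mul_nonneg (inv_nonneg.2 (Real.sqrt_nonneg _)) hφt
  calc (Real.sqrt (α + t))⁻¹ * φ t
      = Real.sqrt (((Real.sqrt (α + t))⁻¹ * φ t)^2) := (Real.sqrt_sq hanon).symm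
    _ ≤ Real.sqrt ((φ α / Real.sqrt α)^2) := Real.sqrt_le_sqrt hL
    _ = φ α / Real.sqrt α := Real.sqrt_sq hrhs
end

section
/- Let H be a complex Hilbert space, Z a positive bounded self-adjoint operator on H, P an orthogonal projection on H, and α > 0. Then the operator αI + P Z P is invertible, and the operator norm of (αI + Z)^{1/2} ∘ P ∘ (αI + P Z P)^{-1} ∘ P ∘ (αI + Z)^{1/2} is at most 1. -/
open ContinuousLinearMap

/-- Lemma 3.4, inequality (eq:prob2) of the paper: for a positive bounded
self-adjoint operator `Z` on a complex Hilbert space, an orthogonal projection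
`P` (self-adjoint idempotent), and `α > 0`, the operator `αI + P Z P` is
invertible and `‖(αI + Z)^{1/2} ∘ P ∘ (αI + P Z P)^{-1} ∘ P ∘ (αI + Z)^{1/2}‖ ≤ 1`,
where the square root is expressed via any positive square root `S` of `αI + Z`
and the inverse via any two-sided inverse `Q` of `αI + P Z P`. -/
theorem stmt_5 {H : Type*} [NormedAddCommGroup H] [InnerProductSpace ℂ H] [CompleteSpace H]
    (Z : H →L[ℂ] H) (hZ : Z.IsPositive)
    (P : H →L[ℂ] H) (hP_sa : IsSelfAdjoint P) (hP_idem : P ∘L P = P)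
    (α : ℝ) (hα : 0 < α) :
    IsUnit ((α : ℂ) • (1 : H →L[ℂ] H) + P ∘L Z ∘L P) ∧
    ∀ S : H →L[ℂ] H, S.IsPositive →
      S ∘L S = (α : ℂ) • (1 : H →L[ℂ] H) + Z →
      ∀ Q : H →L[ℂ] H,
        Q ∘L ((α : ℂ) • (1 : H →L[ℂ] H) + P ∘L Z ∘L P) = 1 →
        ((α : ℂ) • (1 : H →L[ℂ] H) + P ∘L Z ∘L P) ∘L Q = 1 →
        ‖S ∘L P ∘L Q ∘L P ∘L S‖ ≤ 1 := by
  set A : H →L[ℂ] H := (α : ℂ) • (1 : H →L[ℂ] H) + P ∘L Z ∘L P with hA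
  have hPZP : (P ∘L Z ∘L P).IsPositive := by
    have := hZ.adjoint_conj P
    rwa [hP_sa.adjoint_eq] at this
  have hAx : ∀ x : H, A x = (α : ℂ) • x + P (Z (P x)) := fun x => by simp [hA]
  have hA_sa : IsSelfAdjoint A := by
    rw [hA]
    refine (IsSelfAdjoint.smul ?_ (IsSelfAdjoint.one _)).add hPZP.isSelfAdjoint
    exact Complex.conj_ofReal α
  have hPsym : ∀ a b : H, (inner ℂ (P a) b : ℂ) = inner ℂ a (P b) := fun a b =>
    hP_sa.isSymmetric a b
  have hZsym : ∀ a b : H, (inner ℂ (Z a) b : ℂ) = inner ℂ a (Z b) := fun a b =>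
    hZ.isSelfAdjoint.isSymmetric a b
  have key : ∀ x : H, α * ‖x‖ ^ 2 ≤ RCLike.re (inner ℂ (A x) x : ℂ) := by
    intro x
    have h1 : (inner ℂ (A x) x : ℂ) = (α : ℂ) * inner ℂ x x + inner ℂ ((P ∘L Z ∘L P) x) x := by
      rw [hAx, inner_add_left, inner_smul_left, Complex.conj_ofReal]; rfl
    rw [h1, map_add]
    have h2 : RCLike.re ((α:ℂ) * (inner ℂ x x : ℂ)) = α * ‖x‖^2 := by
      rw [@inner_self_eq_norm_sq_to_K ℂ]
      simp [pow_two]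
    rw [h2]
    linarith [hPZP.re_inner_nonneg_left x]
  have hA_pos : A.IsPositive := ⟨hA_sa.isSymmetric, fun x => le_trans (by positivity) (key x)⟩
  have hUnit : IsUnit A := by
    apply isUnit_of_forall_le_norm_inner_map A (c := ⟨α, hα.le⟩) (by exact_mod_cast hα)
    intro x
    calc ‖x‖^2 * α = α * ‖x‖^2 := by ring
    _ ≤ RCLike.re (inner ℂ (A x) x : ℂ) := key x
    _ ≤ ‖(inner ℂ (A x) x : ℂ)‖ := RCLike.re_le_norm _
  refine ⟨hUnit, ?_⟩
  intro S hS_pos hS2 Q hQA hAQ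
  have hSsym : ∀ a b : H, (inner ℂ (S a) b : ℂ) = inner ℂ a (S b) := fun a b =>
    hS_pos.isSelfAdjoint.isSymmetric a b
  have hAQ_apply : ∀ y : H, A (Q y) = y := fun y => by
    rw [← comp_apply, hAQ, ContinuousLinearMap.one_apply]
  have hQ_sa : IsSelfAdjoint Q := by
    have h1 : star Q ∘L A = 1 := by
      have := congrArg star hAQ
      rwa [star_eq_adjoint, adjoint_comp, ← star_eq_adjoint, ← star_eq_adjoint,
        hA_sa.star_eq, star_one] at this
    calc star Q = star Q ∘L (A ∘L Q) := by rw [hAQ]; ext x; rfl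
    _ = (star Q ∘L A) ∘L Q := by ext x; rfl
    _ = Q := by rw [h1]; ext x; rfl
  have hQ_pos : Q.IsPositive := by
    refine ⟨hQ_sa.isSymmetric, fun y => ?_⟩
    have : Q.reApplyInnerSelf y = RCLike.re (inner ℂ (A (Q y)) (Q y) : ℂ) := by
      rw [reApplyInnerSelf]
      rw [← inner_re_symm]
      congr 1
      rw [hAQ_apply]
    rw [this]
    exact hA_pos.re_inner_nonneg_left _
  have hT_pos : (S ∘L P ∘L Q ∘L P ∘L S).IsPositive := by
    have h := hQ_pos.adjoint_conj (P ∘L S)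
    rw [adjoint_comp, hP_sa.adjoint_eq, hS_pos.isSelfAdjoint.adjoint_eq] at h
    exact h
  -- key bound
  have hbound : ∀ x : H, RCLike.re (inner ℂ ((S ∘L P ∘L Q ∘L P ∘L S) x) x : ℂ) ≤ ‖x‖^2 := by
    intro x
    set u : H := Q (P (S x)) with hu
    have hPSx : P (S x) = A u := (hAQ_apply (P (S x))).symm
    set t : ℝ := RCLike.re (inner ℂ (A u) u : ℂ) with ht
    have ht0 : 0 ≤ t := hA_pos.re_inner_nonneg_left u
    have hTx : RCLike.re (inner ℂ ((S ∘L P ∘L Q ∘L P ∘L S) x) x : ℂ) = t := by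
      have h : (inner ℂ ((S ∘L P ∘L Q ∘L P ∘L S) x) x : ℂ) = inner ℂ u (A u) := by
        simp only [comp_apply]
        rw [hSsym (P (Q (P (S x)))) x, hPsym (Q (P (S x))) (S x), ← hPSx, hu]
      rw [h, ht, inner_re_symm]
    have hPu : ‖P u‖ ≤ ‖u‖ := by
      have h1 : RCLike.re (inner ℂ (P u) (P u) : ℂ) ≤ ‖P u‖ * ‖u‖ := by
        rw [← hPsym (P u) u, show P (P u) = P u from by rw [← comp_apply, hP_idem]]
        exact re_inner_le_norm (𝕜 := ℂ) _ _
      have h2 : RCLike.re (inner ℂ (P u) (P u) : ℂ) = ‖P u‖^2 := by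
        rw [@inner_self_eq_norm_sq_to_K ℂ]; simp [pow_two]
      rw [h2] at h1
      nlinarith [norm_nonneg (P u), norm_nonneg u]
    have hSPu : ‖S (P u)‖^2 ≤ t := by
      have h1 : RCLike.re (inner ℂ ((S ∘L S) (P u)) (P u) : ℂ) = ‖S (P u)‖^2 := by
        rw [comp_apply, hSsym (S (P u)) (P u), @inner_self_eq_norm_sq_to_K ℂ]
        simp [pow_two]
      rw [hS2] at h1
      have h2 : RCLike.re (inner ℂ (((α : ℂ) • (1 : H →L[ℂ] H) + Z) (P u)) (P u) : ℂ)
          = α * ‖P u‖^2 + RCLike.re (inner ℂ (Z (P u)) (P u) : ℂ) := by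
        have he : (((α : ℂ) • (1 : H →L[ℂ] H) + Z) (P u)) = (α : ℂ) • (P u) + Z (P u) := by
          simp
        rw [he, inner_add_left, map_add, inner_smul_left, Complex.conj_ofReal]
        congr 1
        rw [@inner_self_eq_norm_sq_to_K ℂ]
        simp [pow_two]
      have h3 : t = α * ‖u‖^2 + RCLike.re (inner ℂ (Z (P u)) (P u) : ℂ) := by
        rw [ht]
        have he : (inner ℂ (A u) u : ℂ) = (α : ℂ) * inner ℂ u u + inner ℂ (Z (P u)) (P u) := by
          rw [hAx, inner_add_left, inner_smul_left, Complex.conj_ofReal,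
            hPsym (Z (P u)) u]
        rw [he, map_add]
        congr 1
        rw [@inner_self_eq_norm_sq_to_K ℂ]
        simp [pow_two]
      rw [h2] at h1
      rw [← h1, h3]
      nlinarith [hα.le, mul_self_le_mul_self (norm_nonneg (P u)) hPu]
    have hcs : t ≤ ‖x‖ * ‖S (P u)‖ := by
      have h1 : t = RCLike.re (inner ℂ x (S (P u)) : ℂ) := by
        rw [ht, ← hPSx, hPsym (S x) u, hSsym x (P u)]
      rw [h1]
      exact re_inner_le_norm (𝕜 := ℂ) _ _
    rw [hTx]
    nlinarith [norm_nonneg x, norm_nonneg (S (P u)), sq_nonneg (‖S (P u)‖ - ‖x‖)]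
  rw [CStarAlgebra.norm_le_one_iff_of_nonneg _
    ((nonneg_iff_isPositive _).2 hT_pos)]
  rw [← sub_nonneg, nonneg_iff_isPositive]
  refine ⟨((IsSelfAdjoint.one (H →L[ℂ] H)).sub hT_pos.isSelfAdjoint).isSymmetric, fun x => ?_⟩
  have : (1 - (S ∘L P ∘L Q ∘L P ∘L S)) x = x - (S ∘L P ∘L Q ∘L P ∘L S) x := rfl
  rw [reApplyInnerSelf, this, inner_sub_left, map_sub]
  have := hbound x
  have hx2 : RCLike.re (inner ℂ x x : ℂ) = ‖x‖^2 := by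
    rw [@inner_self_eq_norm_sq_to_K ℂ]; simp [pow_two]
  rw [hx2]
  linarith
end

section
/- Let H be a complex Hilbert space, Z a positive bounded self-adjoint operator on H, P an orthogonal projection on H, and α > 0. Then the operator αI + P Z P is invertible, and the operator norm of (αI + Z)^{1/2} ∘ (αI + P Z P)^{-1} ∘ P ∘ (αI + Z)^{1/2} is at most 1. -/
open ContinuousLinearMap
local notation "⟪" x ", " y "⟫" => @inner ℂ _ _ x y

/-- Lemma 3.4, inequality (eq:prob20) of the paper: for a positive bounded
self-adjoint operator `Z` on a complex Hilbert space, an orthogonal projection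
`P` (self-adjoint idempotent), and `α > 0`, the operator `αI + P Z P` is
invertible and `‖(αI + Z)^{1/2} ∘ (αI + P Z P)^{-1} ∘ P ∘ (αI + Z)^{1/2}‖ ≤ 1`,
where the square root is expressed via any positive square root `S` of `αI + Z`
and the inverse via any two-sided inverse `Q` of `αI + P Z P`. -/
theorem stmt_6 {H : Type*} [NormedAddCommGroup H] [InnerProductSpace ℂ H] [CompleteSpace H]
    (Z : H →L[ℂ] H) (hZ : Z.IsPositive)
    (P : H →L[ℂ] H) (hP_sa : IsSelfAdjoint P) (hP_idem : P ∘L P = P)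
    (α : ℝ) (hα : 0 < α) :
    IsUnit ((α : ℂ) • (1 : H →L[ℂ] H) + P ∘L Z ∘L P) ∧
    ∀ S : H →L[ℂ] H, S.IsPositive →
      S ∘L S = (α : ℂ) • (1 : H →L[ℂ] H) + Z →
      ∀ Q : H →L[ℂ] H,
        Q ∘L ((α : ℂ) • (1 : H →L[ℂ] H) + P ∘L Z ∘L P) = 1 →
        ((α : ℂ) • (1 : H →L[ℂ] H) + P ∘L Z ∘L P) ∘L Q = 1 →
        ‖S ∘L Q ∘L P ∘L S‖ ≤ 1 := by
  set B : H →L[ℂ] H := (α : ℂ) • (1 : H →L[ℂ] H) + P ∘L Z ∘L P with hBdef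
  have hPsym' : (P : H →ₗ[ℂ] H).IsSymmetric := hP_sa.isSymmetric
  have hPsym : ∀ a b : H, ⟪P a, b⟫ = ⟪a, P b⟫ := fun a b => hPsym' a b
  have hPZP : (P ∘L Z ∘L P).IsPositive := by
    have h := hZ.conj_adjoint P
    rwa [hP_sa.adjoint_eq] at h
  -- coercivity of B
  have hBcoer : ∀ x : H, α * (‖x‖ * ‖x‖) ≤ ‖⟪B x, x⟫‖ := by
    intro x
    have h1 : ⟪B x, x⟫ = (α : ℂ) * ⟪x, x⟫ + ⟪(P ∘L Z ∘L P) x, x⟫ := by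
      rw [hBdef]
      simp only [ContinuousLinearMap.add_apply, ContinuousLinearMap.smul_apply,
        ContinuousLinearMap.one_apply, inner_add_left, inner_smul_left,
        RCLike.conj_ofReal, Complex.conj_ofReal]
    have h2 : α * (‖x‖ * ‖x‖) ≤ RCLike.re ⟪B x, x⟫ := by
      rw [h1]
      have h3 : 0 ≤ RCLike.re ⟪(P ∘L Z ∘L P) x, x⟫ := hPZP.re_inner_nonneg_left x
      have h4 : RCLike.re ((α : ℂ) * ⟪x, x⟫) = α * (‖x‖ * ‖x‖) := by
        have h5 : RCLike.re ⟪x, x⟫ = ‖x‖ * ‖x‖ := inner_self_eq_norm_mul_norm (𝕜 := ℂ) x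
        simp only [RCLike.re_to_complex] at h5 ⊢
        rw [Complex.mul_re, Complex.ofReal_re, Complex.ofReal_im, h5]
        have h6 : (⟪x, x⟫ : ℂ).im = 0 := by
          have h7 := inner_self_im (𝕜 := ℂ) (x := x)
          rwa [RCLike.im_to_complex] at h7
        rw [h6]
        ring
      rw [map_add, h4]
      linarith
    exact h2.trans (RCLike.re_le_norm _)
  have hBunit : IsUnit B := by
    apply isUnit_of_forall_le_norm_inner_map B (c := ⟨α, hα.le⟩) (by exact_mod_cast hα)
    intro x
    calc ‖x‖ ^ 2 * (⟨α, hα.le⟩ : NNReal) = α * (‖x‖ * ‖x‖) := by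
          push_cast; ring
      _ ≤ ‖⟪B x, x⟫‖ := hBcoer x
  refine ⟨hBunit, ?_⟩
  intro S hS hSsq Q hQ1 hQ2
  have hSsym' : (S : H →ₗ[ℂ] H).IsSymmetric := hS.isSelfAdjoint.isSymmetric
  have hSsym : ∀ a b : H, ⟪S a, b⟫ = ⟪a, S b⟫ := fun a b => hSsym' a b
  -- P commutes with B
  have hP : P * P = P := hP_idem
  have hBP : B * P = P * B := by
    have h1 : (P * Z * P) * P = P * Z * P := by
      rw [mul_assoc (P * Z) P P, hP]
    have h2 : P * (P * Z * P) = P * Z * P := by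
      rw [← mul_assoc, ← mul_assoc, hP]
    have hBdef' : B = (α : ℂ) • (1 : H →L[ℂ] H) + P * Z * P := by
      rw [hBdef]; rfl
    rw [hBdef', add_mul, mul_add, smul_mul_assoc, mul_smul_comm, one_mul, mul_one, h1, h2]
  have hQ1' : Q * B = 1 := hQ1
  have hQ2' : B * Q = 1 := hQ2
  -- Q commutes with P
  have hQP : Q * P = P * Q := by
    calc Q * P = Q * P * (B * Q) := by rw [hQ2', mul_one]
      _ = Q * ((P * B) * Q) := by rw [mul_assoc Q P (B * Q), ← mul_assoc P B Q]
      _ = Q * ((B * P) * Q) := by rw [← hBP]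
      _ = (Q * B) * (P * Q) := by rw [mul_assoc B P Q, ← mul_assoc Q B (P * Q)]
      _ = P * Q := by rw [hQ1', one_mul]
  -- the norm bound
  rw [show (1 : ℝ) = ‖(1 : ℝ)‖ by simp] at *
  apply ContinuousLinearMap.opNorm_le_bound _ (by norm_num)
  intro x
  set u : H := P (S x) with hu
  set y : H := Q u with hy
  have happ : (S ∘L Q ∘L P ∘L S) x = S y := rfl
  have hPy : P y = y := by
    have h := congrArg (fun T : H →L[ℂ] H => T u) hQP
    simp only [ContinuousLinearMap.mul_def, ContinuousLinearMap.comp_apply] at h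
    have h2 : P u = u := by
      have := congrArg (fun T : H →L[ℂ] H => T (S x)) hP_idem
      simpa [hu] using this
    calc P y = P (Q u) := rfl
      _ = Q (P u) := h.symm
      _ = Q u := by rw [h2]
  have hSS : S (S y) = (α : ℂ) • y + Z y := by
    have := congrArg (fun T : H →L[ℂ] H => T y) hSsq
    simpa using this
  have hBy : B y = u := by
    have := congrArg (fun T : H →L[ℂ] H => T u) hQ2
    simpa [hy] using this
  have hBy' : (α : ℂ) • y + P (Z (P y)) = u := by
    have := hBy
    simpa [hBdef] using this
  have key : ⟪S y, S y⟫ = ⟪S y, x⟫ := by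
    calc ⟪S y, S y⟫ = ⟪y, S (S y)⟫ := hSsym y (S y)
      _ = ⟪y, (α : ℂ) • y + Z y⟫ := by rw [hSS]
      _ = ⟪y, (α : ℂ) • y + P (Z (P y))⟫ := by
          rw [inner_add_right, inner_add_right]
          congr 1
          rw [← hPsym y (Z (P y)), hPy]
      _ = ⟪y, u⟫ := by rw [hBy']
      _ = ⟪y, P (S x)⟫ := rfl
      _ = ⟪P y, S x⟫ := (hPsym y (S x)).symm
      _ = ⟪y, S x⟫ := by rw [hPy]
      _ = ⟪S y, x⟫ := (hSsym y x).symm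
  have hCS : ‖S y‖ * ‖S y‖ ≤ ‖S y‖ * ‖x‖ := by
    have h1 : ‖S y‖ * ‖S y‖ = RCLike.re ⟪S y, S y⟫ :=
      (inner_self_eq_norm_mul_norm (𝕜 := ℂ) (S y)).symm
    calc ‖S y‖ * ‖S y‖ = RCLike.re ⟪S y, x⟫ := by rw [h1, key]
      _ ≤ ‖⟪S y, x⟫‖ := RCLike.re_le_norm _
      _ ≤ ‖S y‖ * ‖x‖ := norm_inner_le_norm _ _
  have hSy : ‖S y‖ ≤ ‖x‖ := by
    rcases eq_or_lt_of_le (norm_nonneg (S y)) with h | h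
    · rw [← h]; exact norm_nonneg x
    · exact le_of_mul_le_mul_left (by linarith [hCS]) h
  rw [happ]
  calc ‖S y‖ ≤ ‖x‖ := hSy
    _ = ‖(1 : ℝ)‖ * ‖x‖ := by simp
end

section
/- Let H and K be complex Hilbert spaces, T : H → K a bounded linear operator, P an orthogonal projection on H, and α > 0. Then αI + T P T* is invertible and the operator norm of (αI + T P T*)^{-1} ∘ (αI + T T*) on K is at most 1 + α^{-1} ‖T ∘ (I − P)‖². -/
set_option maxHeartbeats 800000


open ContinuousLinearMap

open scoped InnerProductSpace

/-- The deterministic form of the bound (b_add_err) from Appendix B of the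
paper: for a bounded operator `T : H → K` between complex Hilbert spaces, an
orthogonal projection `P` on `H`, and `α > 0`, the operator `αI + T P T*` is
invertible and `‖(αI + T P T*)^{-1} ∘ (αI + T T*)‖ ≤ 1 + α⁻¹ ‖T ∘ (I − P)‖²`,
where the inverse is expressed via any two-sided inverse `Q` of `αI + T P T*`. -/
theorem stmt_9 {H K : Type*} [NormedAddCommGroup H] [InnerProductSpace ℂ H] [CompleteSpace H]
    [NormedAddCommGroup K] [InnerProductSpace ℂ K] [CompleteSpace K]
    (T : H →L[ℂ] K) (P : H →L[ℂ] H) (hP_sa : IsSelfAdjoint P) (hP_idem : P ∘L P = P)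
    (α : ℝ) (hα : 0 < α) :
    IsUnit ((α : ℂ) • (1 : K →L[ℂ] K) + T ∘L P ∘L ContinuousLinearMap.adjoint T) ∧
    ∀ Q : K →L[ℂ] K,
      Q ∘L ((α : ℂ) • (1 : K →L[ℂ] K) + T ∘L P ∘L ContinuousLinearMap.adjoint T) = 1 →
      ((α : ℂ) • (1 : K →L[ℂ] K) + T ∘L P ∘L ContinuousLinearMap.adjoint T) ∘L Q = 1 →
      ‖Q ∘L ((α : ℂ) • (1 : K →L[ℂ] K) + T ∘L ContinuousLinearMap.adjoint T)‖ ≤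
        1 + α⁻¹ * ‖T ∘L ((1 : H →L[ℂ] H) - P)‖ ^ 2 := by
  set T' : K →L[ℂ] H := ContinuousLinearMap.adjoint T with hT'
  set A : K →L[ℂ] K := (α : ℂ) • (1 : K →L[ℂ] K) + T ∘L P ∘L T' with hA
  have hPadj : ContinuousLinearMap.adjoint P = P := hP_sa
  -- ⟪P v, v⟫ = ‖P v‖²
  have hPv : ∀ v : H, ⟪P v, v⟫_ℂ = (‖P v‖ : ℂ) ^ 2 := by
    intro v
    have h1 : P v = P (P v) := by
      conv_lhs => rw [← hP_idem]
      rfl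
    rw [h1]
    rw [show ⟪P (P v), v⟫_ℂ = ⟪(ContinuousLinearMap.adjoint P) (P v), v⟫_ℂ by rw [hPadj]]
    rw [adjoint_inner_left]
    rw [show ⟪P v, P v⟫_ℂ = ⟪P v, P (P v)⟫_ℂ by rw [← h1]] at *
    rw [← h1, inner_self_eq_norm_sq_to_K]
    norm_cast
  -- the key inner-product identity
  have hinner : ∀ x : K, ⟪A x, x⟫_ℂ = ((α * ‖x‖ ^ 2 + ‖P (T' x)‖ ^ 2 : ℝ) : ℂ) := by
    intro x
    have hAx : A x = (α : ℂ) • x + T (P (T' x)) := by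
      simp [hA, ContinuousLinearMap.add_apply, ContinuousLinearMap.comp_apply]
    rw [hAx, inner_add_left, inner_smul_left]
    have h2 : ⟪T (P (T' x)), x⟫_ℂ = ⟪P (T' x), T' x⟫_ℂ := by
      rw [hT', ← adjoint_inner_right]
    rw [h2, hPv, inner_self_eq_norm_sq_to_K]
    push_cast [Complex.conj_ofReal]
    rfl
  have hlow : ∀ x : K, ‖x‖ ^ 2 * α ≤ ‖⟪A x, x⟫_ℂ‖ := by
    intro x
    rw [hinner x, Complex.norm_real, Real.norm_eq_abs, abs_of_nonneg (by positivity)]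
    nlinarith [sq_nonneg ‖P (T' x)‖]
  constructor
  · exact isUnit_of_forall_le_norm_inner_map A (c := ⟨α, hα.le⟩) (by exact_mod_cast hα) hlow
  intro Q hQ1 hQ2
  -- ‖Q y‖ ≤ α⁻¹ ‖y‖
  have hQnorm : ‖Q‖ ≤ α⁻¹ := by
    refine ContinuousLinearMap.opNorm_le_bound Q (by positivity) fun y => ?_
    have hAQ : A (Q y) = y := by
      have := congrArg (fun f : K →L[ℂ] K => f y) hQ2
      simpa [ContinuousLinearMap.comp_apply] using this
    have h1 := hlow (Q y)
    have h2 : ‖⟪A (Q y), Q y⟫_ℂ‖ ≤ ‖A (Q y)‖ * ‖Q y‖ := norm_inner_le_norm _ _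
    rw [hAQ] at h1 h2
    have h3 : ‖Q y‖ ^ 2 * α ≤ ‖y‖ * ‖Q y‖ := h1.trans h2
    rcases eq_or_lt_of_le (norm_nonneg (Q y)) with h0 | h0
    · rw [← h0]; positivity
    · rw [inv_mul_eq_div, le_div_iff₀ hα]
      nlinarith
  -- the error operator
  set B : H →L[ℂ] K := T ∘L ((1 : H →L[ℂ] H) - P) with hB
  have hBadj : ContinuousLinearMap.adjoint B = ((1 : H →L[ℂ] H) - P) ∘L T' := by
    rw [hB, adjoint_comp, hT']
    congr 1
    exact ((IsSelfAdjoint.one (H →L[ℂ] H)).sub hP_sa)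
  have hproj : ((1 : H →L[ℂ] H) - P) ∘L ((1 : H →L[ℂ] H) - P) = (1 : H →L[ℂ] H) - P := by
    have hm : P * P = P := hP_idem
    show ((1 : H →L[ℂ] H) - P) * ((1 : H →L[ℂ] H) - P) = (1 : H →L[ℂ] H) - P
    have : ((1 : H →L[ℂ] H) - P) * ((1 : H →L[ℂ] H) - P) =
        1 - P - P + P * P := by noncomm_ring
    rw [this, hm]; abel
  have hBB : B ∘L ContinuousLinearMap.adjoint B = T ∘L ((1 : H →L[ℂ] H) - P) ∘L T' := by
    rw [hBadj, hB, comp_assoc, ← comp_assoc ((1 : H →L[ℂ] H) - P), hproj]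
  -- decomposition αI + T T* = A + B B*
  have hdecomp : (α : ℂ) • (1 : K →L[ℂ] K) + T ∘L T' = A + B ∘L ContinuousLinearMap.adjoint B := by
    rw [hBB, hA, add_assoc]
    congr 1
    rw [← ContinuousLinearMap.comp_add, ← ContinuousLinearMap.add_comp]
    have : P + ((1 : H →L[ℂ] H) - P) = 1 := by abel
    rw [this, ContinuousLinearMap.one_def, ContinuousLinearMap.id_comp]
  rw [hT'] at hdecomp
  rw [hdecomp, ContinuousLinearMap.comp_add, hQ1]
  have hstep : ‖Q ∘L (B ∘L ContinuousLinearMap.adjoint B)‖ ≤ α⁻¹ * ‖B‖ ^ 2 := by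
    calc ‖Q ∘L (B ∘L ContinuousLinearMap.adjoint B)‖
        ≤ ‖Q‖ * ‖B ∘L ContinuousLinearMap.adjoint B‖ := ContinuousLinearMap.opNorm_comp_le _ _
      _ ≤ ‖Q‖ * (‖B‖ * ‖ContinuousLinearMap.adjoint B‖) := by
          gcongr
          exact ContinuousLinearMap.opNorm_comp_le _ _
      _ = ‖Q‖ * ‖B‖ ^ 2 := by
          rw [LinearIsometryEquiv.norm_map ContinuousLinearMap.adjoint B]; ring
      _ ≤ α⁻¹ * ‖B‖ ^ 2 := by
          have : (0:ℝ) ≤ ‖B‖ ^ 2 := by positivity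
          nlinarith [norm_nonneg Q]
  calc ‖(1 : K →L[ℂ] K) + Q ∘L (B ∘L ContinuousLinearMap.adjoint B)‖
      ≤ ‖(1 : K →L[ℂ] K)‖ + ‖Q ∘L (B ∘L ContinuousLinearMap.adjoint B)‖ := norm_add_le _ _
    _ ≤ 1 + α⁻¹ * ‖T ∘L ((1 : H →L[ℂ] H) - P)‖ ^ 2 := by
        have h1 : ‖(1 : K →L[ℂ] K)‖ ≤ 1 := ContinuousLinearMap.norm_id_le
        rw [← hB]
        linarith [hstep]
end

section
/- Let l > 0, p > 0, and for every α > 0 let g_α : (0, l] → ℝ be given, together with constants γ₀ ≥ 0 and γ_p ≥ 0 such that for all α > 0 and all t ∈ (0, l]: |1 − t·g_α(t)| ≤ γ₀ and t^p·|1 − t·g_α(t)| ≤ γ_p·α^p. Let φ : (0, l] → ℝ be a positive, nondecreasing function such that t ↦ t^p/φ(t) is nondecreasing on (0, l]. Then for every α ∈ (0, l] and every t ∈ (0, l]: |1 − t·g_α(t)|·φ(t) ≤ max(γ₀, γ_p)·φ(α). -/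
/-- Proposition 3.1 (cover) of the paper: if the regularization family `g_α`
satisfies `|1 − t g_α(t)| ≤ γ₀` and has qualification `p` with constant `γ_p`
(i.e. `t^p |1 − t g_α(t)| ≤ γ_p α^p`), and the qualification `p` covers the
index function `φ` (i.e. `t ↦ t^p/φ(t)` is nondecreasing on `(0, l]`, with `φ`
positive and nondecreasing there), then for all `α, t ∈ (0, l]`:
`|1 − t g_α(t)| φ(t) ≤ max(γ₀, γ_p) φ(α)`. -/
theorem stmt_11 (l p : ℝ) (hl : 0 < l) (hp : 0 < p)
    (g : ℝ → ℝ → ℝ) (γ₀ γp : ℝ) (hγ₀ : 0 ≤ γ₀) (hγp : 0 ≤ γp)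
    (hbound : ∀ α > (0 : ℝ), ∀ t ∈ Set.Ioc (0 : ℝ) l, |1 - t * g α t| ≤ γ₀)
    (hqual : ∀ α > (0 : ℝ), ∀ t ∈ Set.Ioc (0 : ℝ) l, t ^ p * |1 - t * g α t| ≤ γp * α ^ p)
    (φ : ℝ → ℝ)
    (hφ_pos : ∀ t ∈ Set.Ioc (0 : ℝ) l, 0 < φ t)
    (hφ_mono : MonotoneOn φ (Set.Ioc 0 l))
    (hcover : MonotoneOn (fun t => t ^ p / φ t) (Set.Ioc 0 l))
    (α : ℝ) (hα : α ∈ Set.Ioc (0 : ℝ) l) (t : ℝ) (ht : t ∈ Set.Ioc (0 : ℝ) l) :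
    |1 - t * g α t| * φ t ≤ max γ₀ γp * φ α := by
  obtain ⟨hα0, hαl⟩ := hα
  obtain ⟨ht0, htl⟩ := ht
  have hφα : 0 < φ α := hφ_pos α ⟨hα0, hαl⟩
  have hφt : 0 < φ t := hφ_pos t ⟨ht0, htl⟩
  rcases le_total t α with h | h
  · calc |1 - t * g α t| * φ t ≤ γ₀ * φ α := by
          apply mul_le_mul (hbound α hα0 t ⟨ht0, htl⟩)
            (hφ_mono ⟨ht0, htl⟩ ⟨hα0, hαl⟩ h) hφt.le hγ₀
      _ ≤ max γ₀ γp * φ α := by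
          gcongr; exact le_max_left _ _
  · have hc := hcover ⟨hα0, hαl⟩ ⟨ht0, htl⟩ h
    simp only at hc
    -- α^p / φ α ≤ t^p / φ t, so φ t / t^p ≤ φ α / α^p
    have htp : (0:ℝ) < t ^ p := Real.rpow_pos_of_pos ht0 p
    have hαp : (0:ℝ) < α ^ p := Real.rpow_pos_of_pos hα0 p
    have hq := hqual α hα0 t ⟨ht0, htl⟩
    have key : φ t * α ^ p ≤ φ α * t ^ p := by
      rw [div_le_div_iff₀ hφα hφt] at hc
      linarith
    have h1 : |1 - t * g α t| * φ t * α ^ p ≤ γp * α ^ p / t ^ p * (φ α * t ^ p) := by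
      calc |1 - t * g α t| * φ t * α ^ p
          ≤ γp * α ^ p / t ^ p * (φ t * α ^ p) := by
            rw [div_mul_eq_mul_div, le_div_iff₀ htp]
            have : |1 - t * g α t| * φ t * α ^ p * t ^ p
                = (t ^ p * |1 - t * g α t|) * (φ t * α ^ p) := by ring
            rw [this]
            have habs : 0 ≤ φ t * α ^ p := by positivity
            calc (t ^ p * |1 - t * g α t|) * (φ t * α ^ p)
                ≤ (γp * α ^ p) * (φ t * α ^ p) := by
                  apply mul_le_mul_of_nonneg_right hq habs
              _ = γp * α ^ p * (φ t * α ^ p) := rfl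
        _ ≤ γp * α ^ p / t ^ p * (φ α * t ^ p) := by
            apply mul_le_mul_of_nonneg_left key (by positivity)
    have h2 : γp * α ^ p / t ^ p * (φ α * t ^ p) = γp * φ α * α ^ p := by
      field_simp
    rw [h2] at h1
    have h3 : |1 - t * g α t| * φ t ≤ γp * φ α :=
      le_of_mul_le_mul_right (by linarith) hαp
    calc |1 - t * g α t| * φ t ≤ γp * φ α := h3
      _ ≤ max γ₀ γp * φ α := by gcongr; exact le_max_right _ _
end

section
/- Let l > 0 and let φ : [0, l] → ℝ be a nonnegative, nondecreasing function with φ(0) = 0 such that φ² is concave on [0, l]. Then for every α ∈ (0, l] and every t ∈ (0, l]: (α/(t + α))·φ(t) ≤ φ(α). -/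
/-- Relation (cond_qualific) for the standard Tikhonov method: if
`φ : [0, l] → ℝ` is nonnegative, nondecreasing, vanishes at `0`, and `φ²` is
concave on `[0, l]`, then for all `α, t ∈ (0, l]`:
`(α/(t + α)) φ(t) ≤ φ(α)`. -/
theorem stmt_12 (l : ℝ) (hl : 0 < l) (φ : ℝ → ℝ)
    (hφ_nonneg : ∀ t ∈ Set.Icc (0 : ℝ) l, 0 ≤ φ t)
    (hφ_mono : MonotoneOn φ (Set.Icc 0 l))
    (hφ0 : φ 0 = 0)
    (hφ_conc : ConcaveOn ℝ (Set.Icc 0 l) (fun t => (φ t) ^ 2))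
    (α : ℝ) (hα : α ∈ Set.Ioc (0 : ℝ) l) (t : ℝ) (ht : t ∈ Set.Ioc (0 : ℝ) l) :
    (α / (t + α)) * φ t ≤ φ α := by
  obtain ⟨hα0, hαl⟩ := hα
  obtain ⟨ht0, htl⟩ := ht
  have htα : 0 < t + α := by linarith
  have hαmem : α ∈ Set.Icc (0 : ℝ) l := ⟨le_of_lt hα0, hαl⟩
  have htmem : t ∈ Set.Icc (0 : ℝ) l := ⟨le_of_lt ht0, htl⟩
  have hφt : 0 ≤ φ t := hφ_nonneg t htmem
  have hφα : 0 ≤ φ α := hφ_nonneg α hαmem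
  rcases le_or_gt t α with h | h
  · calc (α / (t + α)) * φ t ≤ 1 * φ t := by
          apply mul_le_mul_of_nonneg_right _ hφt
          rw [div_le_one htα]; linarith
      _ = φ t := one_mul _
      _ ≤ φ α := hφ_mono htmem hαmem h
  · -- α < t: concavity gives φ(α)² ≥ (α/t) φ(t)²
    have hat : 0 < α / t := div_pos hα0 ht0
    have hat1 : α / t ≤ 1 := by rw [div_le_one ht0]; linarith
    have hc := hφ_conc.2 htmem (⟨le_refl 0, le_of_lt hl⟩ : (0:ℝ) ∈ Set.Icc 0 l)
      (le_of_lt hat) (by linarith : (0:ℝ) ≤ 1 - α / t) (by ring)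
    simp only [smul_eq_mul, hφ0] at hc
    have hcomb : (α / t) * t + (1 - α / t) * 0 = α := by field_simp; ring
    rw [hcomb] at hc
    have hsq : ((α / (t + α)) * φ t) ^ 2 ≤ (φ α) ^ 2 := by
      have h1 : (α / (t + α)) ^ 2 ≤ α / t := by
        rw [div_pow, div_le_div_iff₀ (by positivity) ht0]
        nlinarith [mul_pos hα0 (mul_pos ht0 ht0), mul_pos (mul_pos hα0 hα0) ht0,
          mul_pos hα0 (mul_pos hα0 hα0)]
      calc ((α / (t + α)) * φ t) ^ 2 = (α / (t + α)) ^ 2 * (φ t) ^ 2 := by ring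
        _ ≤ (α / t) * (φ t) ^ 2 := by
            apply mul_le_mul_of_nonneg_right h1 (sq_nonneg _)
        _ ≤ (φ α) ^ 2 := by nlinarith
    have hL : 0 ≤ (α / (t + α)) * φ t := by positivity
    nlinarith [sq_nonneg ((α / (t + α)) * φ t - φ α), sq_nonneg ((α / (t + α)) * φ t + φ α)]
end

section
/- Let l > 0 and let φ : [0, l] → ℝ be a nonnegative, nondecreasing function with φ(0) = 0 such that φ² is concave on [0, l]. Then for every α ∈ (0, l] and every t ∈ (0, l]: (α/(t + α))·√t·φ(t) ≤ √α·φ(α). -/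
/-- Relation (qualific_root) for the standard Tikhonov method (with constant
`γ_* = 1`): if `φ : [0, l] → ℝ` is nonnegative, nondecreasing, vanishes at `0`,
and `φ²` is concave on `[0, l]`, then for all `α, t ∈ (0, l]`:
`(α/(t + α)) √t φ(t) ≤ √α φ(α)`. -/
theorem stmt_13 (l : ℝ) (hl : 0 < l) (φ : ℝ → ℝ)
    (hφ_nonneg : ∀ t ∈ Set.Icc (0 : ℝ) l, 0 ≤ φ t)
    (hφ_mono : MonotoneOn φ (Set.Icc 0 l))
    (hφ0 : φ 0 = 0)
    (hφ_conc : ConcaveOn ℝ (Set.Icc 0 l) (fun t => (φ t) ^ 2))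
    (α : ℝ) (hα : α ∈ Set.Ioc (0 : ℝ) l) (t : ℝ) (ht : t ∈ Set.Ioc (0 : ℝ) l) :
    (α / (t + α)) * Real.sqrt t * φ t ≤ Real.sqrt α * φ α := by
  obtain ⟨hα0, hαl⟩ := hα
  obtain ⟨ht0, htl⟩ := ht
  have hαm : α ∈ Set.Icc (0:ℝ) l := ⟨hα0.le, hαl⟩
  have htm : t ∈ Set.Icc (0:ℝ) l := ⟨ht0.le, htl⟩
  have hφα : 0 ≤ φ α := hφ_nonneg α hαm
  have hφt : 0 ≤ φ t := hφ_nonneg t htm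
  have hta : 0 < t + α := by linarith
  have hsa : 0 < Real.sqrt α := Real.sqrt_pos.2 hα0
  rcases le_or_gt t α with h | h
  · -- monotone case
    have h1 : α / (t + α) ≤ 1 := by
      rw [div_le_one hta]; linarith
    have h2 : Real.sqrt t ≤ Real.sqrt α := Real.sqrt_le_sqrt h
    have h3 : φ t ≤ φ α := hφ_mono htm hαm h
    calc (α / (t + α)) * Real.sqrt t * φ t ≤ 1 * Real.sqrt α * φ α := by
          apply mul_le_mul (mul_le_mul h1 h2 (Real.sqrt_nonneg t) (by norm_num))
            h3 hφt (by positivity)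
      _ = Real.sqrt α * φ α := by ring
  · -- concavity case: φ(t)² ≤ (t/α) φ(α)²
    have key : (φ t) ^ 2 ≤ t / α * (φ α) ^ 2 := by
      have hc := hφ_conc.2 htm (Set.left_mem_Icc.2 hl.le)
        (show (0:ℝ) ≤ α / t by positivity)
        (show (0:ℝ) ≤ 1 - α / t by rw [sub_nonneg, div_le_one ht0]; exact h.le)
        (by ring)
      have hx : (α / t) • t + (1 - α / t) • (0:ℝ) = α := by
        show α / t * t + (1 - α / t) * (0:ℝ) = α
        field_simp
        ring
      rw [hx] at hc
      simp only [smul_eq_mul, hφ0] at hc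
      have hc' : α / t * φ t ^ 2 ≤ φ α ^ 2 := by nlinarith [hc]
      have hc'' : α / t * φ t ^ 2 * t ≤ φ α ^ 2 * t :=
        mul_le_mul_of_nonneg_right hc' ht0.le
      rw [div_mul_eq_mul_div, div_mul_cancel₀ _ ht0.ne'] at hc''
      rw [div_mul_eq_mul_div, le_div_iff₀ hα0]
      nlinarith [hc'']
    have hφtle : φ t ≤ Real.sqrt (t / α) * φ α := by
      have : φ t = Real.sqrt ((φ t) ^ 2) := (Real.sqrt_sq hφt).symm
      rw [this]
      calc Real.sqrt ((φ t) ^ 2) ≤ Real.sqrt (t / α * (φ α) ^ 2) :=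
            Real.sqrt_le_sqrt key
        _ = Real.sqrt (t / α) * φ α := by
            rw [Real.sqrt_mul (by positivity), Real.sqrt_sq hφα]
    have hcoef : (α / (t + α)) * Real.sqrt t * Real.sqrt (t / α) ≤ Real.sqrt α := by
      have h1 : Real.sqrt t * Real.sqrt (t / α) = t / Real.sqrt α := by
        rw [← Real.sqrt_mul ht0.le]
        have : t * (t / α) = t ^ 2 / α := by ring
        rw [this, Real.sqrt_div (by positivity), Real.sqrt_sq ht0.le]
      rw [mul_assoc, h1]
      rw [div_mul_div_comm]
      rw [div_le_iff₀ (by positivity)]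
      have hαs : α = Real.sqrt α * Real.sqrt α := (Real.mul_self_sqrt hα0.le).symm
      nlinarith [Real.sq_sqrt hα0.le, Real.sqrt_nonneg α]
    calc (α / (t + α)) * Real.sqrt t * φ t
        ≤ (α / (t + α)) * Real.sqrt t * (Real.sqrt (t / α) * φ α) := by
          apply mul_le_mul_of_nonneg_left hφtle (by positivity)
      _ = ((α / (t + α)) * Real.sqrt t * Real.sqrt (t / α)) * φ α := by ring
      _ ≤ Real.sqrt α * φ α := mul_le_mul_of_nonneg_right hcoef hφα
end

section
/- Let H be a complex Hilbert space and let A and B be positive bounded self-adjoint operators on H. Then for every s with 0 ≤ s ≤ 1, the operator norm satisfies ‖A^s ∘ B^s‖ ≤ ‖A ∘ B‖^s, where A^s and B^s are defined by the continuous functional calculus (real powers of positive operators). -/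
open ContinuousLinearMap Filter
open scoped NNReal ENNReal

section Aux

lemma myCordes_rpow_cont {s : ℝ} (hs : 0 ≤ s) : Continuous (fun t : ℝ => t ^ s) :=
  continuous_iff_continuousAt.mpr fun x => Real.continuousAt_rpow_const x s (Or.inr hs)

lemma myCordes_spectralRadius_mul_comm {A : Type*} [NormedRing A] [NormedAlgebra ℂ A]
    (a b : A) : spectralRadius ℂ (a * b) = spectralRadius ℂ (b * a) := by
  have key : ∀ x y : A, spectralRadius ℂ (x * y) ≤ spectralRadius ℂ (y * x) := by
    intro x y
    unfold spectralRadius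
    refine iSup₂_le fun k hk => ?_
    rcases eq_or_ne k 0 with rfl | hk0
    · simp
    · have hmem : k ∈ spectrum ℂ (y * x) :=
        by
        have hd : k ∈ spectrum ℂ (x * y) \ {0} := Set.mem_diff_of_mem hk hk0
        exact (spectrum.unit_mem_mul_comm (r := Units.mk0 k hk0)).mp hd.1
      exact le_biSup (fun k : ℂ => (‖k‖₊ : ℝ≥0∞)) hmem
  exact le_antisymm (key a b) (key b a)

variable {H : Type*} [NormedAddCommGroup H] [InnerProductSpace ℂ H] [CompleteSpace H]

lemma myCordes_pow_mul (A : H →L[ℂ] H) (hA : A.IsPositive) {s t : ℝ} (hs : 0 ≤ s) (ht : 0 ≤ t) :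
    cfc (fun x : ℝ => x ^ s) A * cfc (fun x : ℝ => x ^ t) A = cfc (fun x : ℝ => x ^ (s + t)) A := by
  rw [← cfc_mul _ _ A (myCordes_rpow_cont hs).continuousOn (myCordes_rpow_cont ht).continuousOn]
  refine cfc_congr fun x hx => ?_
  have hx0 : (0 : ℝ) ≤ x :=
    spectrum_nonneg_of_nonneg ((ContinuousLinearMap.nonneg_iff_isPositive A).mpr hA) hx
  exact (Real.rpow_add_of_nonneg hx0 hs ht).symm

lemma myCordes_sa (A : H →L[ℂ] H) (s : ℝ) : IsSelfAdjoint (cfc (fun x : ℝ => x ^ s) A) :=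
  cfc_predicate _ A

lemma myCordes_nnnorm_swap (A B : H →L[ℂ] H) (s t : ℝ) :
    ‖cfc (fun x : ℝ => x ^ s) B * cfc (fun x : ℝ => x ^ t) A‖₊
      = ‖cfc (fun x : ℝ => x ^ t) A * cfc (fun x : ℝ => x ^ s) B‖₊ := by
  conv_rhs => rw [← nnnorm_star]
  rw [star_mul, (myCordes_sa A t).star_eq, (myCordes_sa B s).star_eq]

variable [Nontrivial H]

lemma myCordes_key (A B : H →L[ℂ] H) (hA : A.IsPositive) (hB : B.IsPositive)
    {s t : ℝ} (hs : 0 ≤ s) (ht : 0 ≤ t) :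
    ‖cfc (fun x : ℝ => x ^ ((s + t) / 2)) A * cfc (fun x : ℝ => x ^ ((s + t) / 2)) B‖₊ ^ 2
      ≤ ‖cfc (fun x : ℝ => x ^ t) A * cfc (fun x : ℝ => x ^ t) B‖₊
        * ‖cfc (fun x : ℝ => x ^ s) A * cfc (fun x : ℝ => x ^ s) B‖₊ := by
  set m : ℝ := (s + t) / 2 with hm_def
  have hm : 0 ≤ m := by positivity
  set am := cfc (fun x : ℝ => x ^ m) A
  set bm := cfc (fun x : ℝ => x ^ m) B
  set as := cfc (fun x : ℝ => x ^ s) A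
  set at' := cfc (fun x : ℝ => x ^ t) A
  set bs := cfc (fun x : ℝ => x ^ s) B
  set bt := cfc (fun x : ℝ => x ^ t) B
  set c := am * bm with hc
  -- ‖c‖₊ ^ 2 = ‖star c * c‖₊
  have h1 : ‖c‖₊ ^ 2 = ‖star c * c‖₊ := by
    rw [CStarRing.nnnorm_star_mul_self, sq]
  -- star c * c = bm * (am * am) * bm etc.
  have hstar : star c = bm * am := by
    rw [hc, star_mul, (myCordes_sa A m).star_eq, (myCordes_sa B m).star_eq]
  have haa : am * am = as * at' := by
    rw [myCordes_pow_mul A hA hm hm, myCordes_pow_mul A hA hs ht,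
      show m + m = s + t by rw [hm_def]; ring]
  have hbb : bm * bm = bt * bs := by
    rw [myCordes_pow_mul B hB hm hm, myCordes_pow_mul B hB ht hs,
      show m + m = t + s by rw [hm_def]; ring]
  -- spectral radius computation
  have hsa : IsSelfAdjoint (star c * c) := IsSelfAdjoint.star_mul_self c
  have h2 : (‖star c * c‖₊ : ℝ≥0∞) = spectralRadius ℂ (star c * c) :=
    hsa.spectralRadius_eq_nnnorm.symm
  have h3 : spectralRadius ℂ (star c * c)
      = spectralRadius ℂ ((at' * bt) * (bs * as)) := by
    calc spectralRadius ℂ (star c * c)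
        = spectralRadius ℂ (bm * (am * (am * bm))) := by
          rw [hstar, hc]; congr 1
      _ = spectralRadius ℂ ((am * (am * bm)) * bm) := myCordes_spectralRadius_mul_comm _ _
      _ = spectralRadius ℂ (as * ((at' * (bt * bs)))) := by
          rw [show (am * (am * bm)) * bm = (am * am) * (bm * bm) from rfl, haa, hbb]
          congr 1
      _ = spectralRadius ℂ ((at' * (bt * bs)) * as) := myCordes_spectralRadius_mul_comm _ _
      _ = spectralRadius ℂ ((at' * bt) * (bs * as)) := by congr 1
  have h4 : spectralRadius ℂ ((at' * bt) * (bs * as))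
      ≤ (‖at' * bt‖₊ * ‖bs * as‖₊ : ℝ≥0) := by
    refine (spectrum.spectralRadius_le_nnnorm (𝕜 := ℂ) _).trans ?_
    exact_mod_cast ENNReal.coe_le_coe.mpr (nnnorm_mul_le _ _)
  have h5 : ‖bs * as‖₊ = ‖as * bs‖₊ := myCordes_nnnorm_swap A B s s
  rw [h1, ← h5]
  exact ENNReal.coe_le_coe.mp (le_of_eq_of_le (h2.trans h3) h4)

lemma myCordes_pow_zero (A : H →L[ℂ] H) (hA : A.IsPositive) :
    cfc (fun x : ℝ => x ^ (0 : ℝ)) A = 1 := by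
  have : cfc (fun x : ℝ => x ^ (0 : ℝ)) A = cfc (fun _ : ℝ => (1 : ℝ)) A :=
    cfc_congr fun x _ => Real.rpow_zero x
  rw [this]
  exact cfc_const_one ℝ A hA.isSelfAdjoint

lemma myCordes_pow_one (A : H →L[ℂ] H) (hA : A.IsPositive) :
    cfc (fun x : ℝ => x ^ (1 : ℝ)) A = A := by
  have : cfc (fun x : ℝ => x ^ (1 : ℝ)) A = cfc (fun x : ℝ => x) A :=
    cfc_congr fun x _ => Real.rpow_one x
  rw [this]
  exact cfc_id ℝ A hA.isSelfAdjoint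

lemma myCordes_exp_zero (A B : H →L[ℂ] H) (hA : A.IsPositive) (hB : B.IsPositive)
    {r : ℝ} (hr : r = 0) :
    ‖cfc (fun x : ℝ => x ^ r) A * cfc (fun x : ℝ => x ^ r) B‖₊ ≤ ‖A * B‖₊ ^ r := by
  subst hr
  rw [myCordes_pow_zero A hA, myCordes_pow_zero B hB, one_mul, nnnorm_one, NNReal.rpow_zero]

lemma myCordes_exp_one (A B : H →L[ℂ] H) (hA : A.IsPositive) (hB : B.IsPositive)
    {r : ℝ} (hr : r = 1) :
    ‖cfc (fun x : ℝ => x ^ r) A * cfc (fun x : ℝ => x ^ r) B‖₊ ≤ ‖A * B‖₊ ^ r := by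
  subst hr
  rw [myCordes_pow_one A hA, myCordes_pow_one B hB, NNReal.rpow_one]

lemma myCordes_dyadic (A B : H →L[ℂ] H) (hA : A.IsPositive) (hB : B.IsPositive) :
    ∀ n k : ℕ, k ≤ 2 ^ n →
    ‖cfc (fun x : ℝ => x ^ ((k : ℝ) / 2 ^ n)) A * cfc (fun x : ℝ => x ^ ((k : ℝ) / 2 ^ n)) B‖₊
      ≤ ‖A * B‖₊ ^ ((k : ℝ) / 2 ^ n) := by
  intro n
  induction n with
  | zero =>
    intro k hk
    interval_cases k
    · exact myCordes_exp_zero A B hA hB (by norm_num)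
    · exact myCordes_exp_one A B hA hB (by norm_num)
  | succ n ih =>
    intro k hk
    rcases Nat.eq_zero_or_pos k with rfl | hk0
    · exact myCordes_exp_zero A B hA hB (by norm_num)
    -- split k = a + b with a, b ≤ 2 ^ n
    have h2n : (2 : ℕ) ^ (n + 1) = 2 * 2 ^ n := by ring
    set a : ℕ := (k + 1) / 2 with ha_def
    set b : ℕ := k / 2 with hb_def
    have hab : a + b = k := by omega
    have ha : a ≤ 2 ^ n := by omega
    have hb : b ≤ 2 ^ n := by omega
    set s : ℝ := (a : ℝ) / 2 ^ n with hs_def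
    set t : ℝ := (b : ℝ) / 2 ^ n with ht_def
    have hs : 0 ≤ s := by positivity
    have ht : 0 ≤ t := by positivity
    have hmid : (k : ℝ) / 2 ^ (n + 1) = (s + t) / 2 := by
      rw [hs_def, ht_def, ← hab]
      push_cast
      ring
    have hkey := myCordes_key A B hA hB hs ht
    rw [← hmid] at hkey
    have hIH_s := ih a ha
    have hIH_t := ih b hb
    rw [← hs_def] at hIH_s
    rw [← ht_def] at hIH_t
    set M := ‖A * B‖₊
    have hsum : M ^ t * M ^ s = (M ^ ((k : ℝ) / 2 ^ (n + 1))) ^ 2 := by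
      have hne : t + s ≠ 0 := by
        have : (0:ℝ) < t + s := by
          rw [ht_def, hs_def, ← add_div]
          refine div_pos ?_ (by positivity)
          have : (0:ℕ) < b + a := by omega
          exact_mod_cast this
        linarith
      rw [← NNReal.rpow_add' hne]
      have hexp : t + s = ((k : ℝ) / 2 ^ (n + 1)) * (2 : ℕ) := by
        rw [ht_def, hs_def, ← hab]
        push_cast
        ring
      rw [hexp, NNReal.rpow_mul, NNReal.rpow_natCast]
    have : ‖cfc (fun x : ℝ => x ^ ((k:ℝ) / 2 ^ (n+1))) A
        * cfc (fun x : ℝ => x ^ ((k:ℝ) / 2 ^ (n+1))) B‖₊ ^ 2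
        ≤ (M ^ ((k : ℝ) / 2 ^ (n + 1))) ^ 2 := by
      rw [← hsum]
      exact hkey.trans (mul_le_mul' hIH_t hIH_s)
    exact (pow_le_pow_iff_left₀ zero_le zero_le two_ne_zero).mp this

lemma myCordes_tendsto (A : H →L[ℂ] H) (hA : A.IsPositive) {s : ℝ} (hs : 0 < s) (hs1 : s ≤ 1)
    {u : ℕ → ℝ} (hu1 : ∀ n, s ≤ u n) (hu2 : ∀ n, u n ≤ 1) (hu : Tendsto u atTop (nhds s)) :
    Tendsto (fun n => cfc (fun x : ℝ => x ^ u n) A) atTop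
      (nhds (cfc (fun x : ℝ => x ^ s) A)) := by
  set K := spectrum ℝ A
  set S := Set.Icc s 1
  have hGc : Continuous (fun p : S × K => ((p.2 : ℝ)) ^ ((p.1 : ℝ))) := by
    rw [continuous_iff_continuousAt]
    intro p
    have h1 : ContinuousAt (fun q : ℝ × ℝ => q.1 ^ q.2) ((p.2 : ℝ), (p.1 : ℝ)) :=
      Real.continuousAt_rpow _ (Or.inr (lt_of_lt_of_le hs p.1.2.1))
    have h2 : Continuous (fun p : S × K => (((p.2 : ℝ)), ((p.1 : ℝ)))) :=
      (continuous_subtype_val.comp continuous_snd).prodMk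
        (continuous_subtype_val.comp continuous_fst)
    exact ContinuousAt.comp (x := p) h1 h2.continuousAt
  set G : C(S × K, ℝ) := ⟨fun p => ((p.2 : ℝ)) ^ ((p.1 : ℝ)), hGc⟩
  set Gc := G.curry
  set v : ℕ → S := fun n => ⟨u n, hu1 n, hu2 n⟩
  have hv : Tendsto v atTop (nhds (⟨s, le_refl s, hs1⟩ : S)) :=
    tendsto_subtype_rng.mpr hu
  have hGcv : Tendsto (fun n => Gc (v n)) atTop (nhds (Gc ⟨s, le_refl s, hs1⟩)) :=
    (Gc.continuous.tendsto _).comp hv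
  rw [tendsto_iff_norm_sub_tendsto_zero]
  have hbound : ∀ n, ‖cfc (fun x : ℝ => x ^ u n) A - cfc (fun x : ℝ => x ^ s) A‖
      ≤ dist (Gc (v n)) (Gc ⟨s, le_refl s, hs1⟩) := by
    intro n
    rw [← cfc_sub _ _ A (myCordes_rpow_cont ((hs.le.trans (hu1 n)))).continuousOn
      (myCordes_rpow_cont hs.le).continuousOn]
    refine norm_cfc_le dist_nonneg fun x hx => ?_
    have heq : x ^ u n - x ^ s = (Gc (v n) - Gc ⟨s, le_refl s, hs1⟩) (⟨x, hx⟩ : K) := rfl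
    rw [Real.norm_eq_abs, heq, dist_eq_norm, ← Real.norm_eq_abs]
    exact ContinuousMap.norm_coe_le_norm _ _
  refine squeeze_zero (fun n => norm_nonneg _) hbound ?_
  rw [← dist_self (Gc ⟨s, le_refl s, hs1⟩)]
  exact hGcv.dist tendsto_const_nhds

end Aux

/-- Proposition 3.6 of the paper (the Cordes inequality): for positive bounded
self-adjoint operators `A`, `B` on a complex Hilbert space and `0 ≤ s ≤ 1`,
`‖A^s ∘ B^s‖ ≤ ‖A ∘ B‖^s`, where the fractional powers are defined via the
continuous functional calculus. -/
theorem stmt_15 {H : Type*} [NormedAddCommGroup H] [InnerProductSpace ℂ H] [CompleteSpace H]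
    (A B : H →L[ℂ] H) (hA : A.IsPositive) (hB : B.IsPositive)
    (s : ℝ) (hs0 : 0 ≤ s) (hs1 : s ≤ 1) :
    ‖cfc (fun t : ℝ => t ^ s) A ∘L cfc (fun t : ℝ => t ^ s) B‖ ≤ ‖A ∘L B‖ ^ s := by
  rcases subsingleton_or_nontrivial H with hH | hH
  · have h0 : cfc (fun t : ℝ => t ^ s) A ∘L cfc (fun t : ℝ => t ^ s) B = 0 :=
      Subsingleton.elim _ _
    rw [h0, norm_zero]
    exact Real.rpow_nonneg (norm_nonneg _) s
  rcases eq_or_lt_of_le hs0 with rfl | hs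
  · show ‖cfc (fun t : ℝ => t ^ (0:ℝ)) A * cfc (fun t : ℝ => t ^ (0:ℝ)) B‖ ≤ _
    rw [myCordes_pow_zero A hA, myCordes_pow_zero B hB, one_mul, norm_one, Real.rpow_zero]
  -- dyadic approximation from above
  set k : ℕ → ℕ := fun n => ⌈s * 2 ^ n⌉₊ with hk_def
  have hkle : ∀ n, k n ≤ 2 ^ n := by
    intro n
    refine Nat.ceil_le.mpr ?_
    calc s * 2 ^ n ≤ 1 * 2 ^ n := by
          have : (0:ℝ) < 2 ^ n := by positivity
          nlinarith
      _ = (((2:ℕ) ^ n : ℕ) : ℝ) := by push_cast; ring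
  set u : ℕ → ℝ := fun n => (k n : ℝ) / 2 ^ n with hu_def
  have h2pos : ∀ n : ℕ, (0:ℝ) < 2 ^ n := fun n => by positivity
  have hu1 : ∀ n, s ≤ u n := by
    intro n
    rw [hu_def, le_div_iff₀ (h2pos n)]
    exact Nat.le_ceil _
  have hu2 : ∀ n, u n ≤ 1 := by
    intro n
    rw [hu_def, div_le_one (h2pos n)]
    calc ((k n : ℕ) : ℝ) ≤ ((2 ^ n : ℕ) : ℝ) := Nat.cast_le.mpr (hkle n)
      _ = (2 : ℝ) ^ n := by push_cast; ring
  have hu3 : ∀ n, u n ≤ s + (1/2) ^ n := by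
    intro n
    rw [hu_def, div_le_iff₀ (h2pos n)]
    have hceil := Nat.ceil_lt_add_one (by positivity : (0:ℝ) ≤ s * 2 ^ n)
    refine le_of_lt ?_
    calc ((k n : ℝ)) < s * 2 ^ n + 1 := hceil
      _ ≤ (s + (1/2) ^ n) * 2 ^ n := by
          rw [add_mul]
          have : ((1:ℝ)/2) ^ n * 2 ^ n = 1 := by
            rw [← mul_pow]; norm_num
          linarith
  have hu : Tendsto u atTop (nhds s) := by
    have hlow : Tendsto (fun _ : ℕ => s) atTop (nhds s) := tendsto_const_nhds
    have hhigh : Tendsto (fun n : ℕ => s + (1/2) ^ n) atTop (nhds (s + 0)) :=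
      tendsto_const_nhds.add (tendsto_pow_atTop_nhds_zero_of_lt_one (by norm_num) (by norm_num))
    rw [add_zero] at hhigh
    exact tendsto_of_tendsto_of_tendsto_of_le_of_le hlow hhigh hu1 hu3
  have hTA := myCordes_tendsto A hA hs hs1 hu1 hu2 hu
  have hTB := myCordes_tendsto B hB hs hs1 hu1 hu2 hu
  have hLHS : Tendsto (fun n => ‖cfc (fun x : ℝ => x ^ u n) A * cfc (fun x : ℝ => x ^ u n) B‖)
      atTop (nhds ‖cfc (fun t : ℝ => t ^ s) A * cfc (fun t : ℝ => t ^ s) B‖) :=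
    (hTA.mul hTB).norm
  have hRHS : Tendsto (fun n => ‖A * B‖ ^ u n) atTop (nhds (‖A * B‖ ^ s)) := by
    have hc : ContinuousAt (fun q : ℝ × ℝ => q.1 ^ q.2) (‖A * B‖, s) :=
      Real.continuousAt_rpow _ (Or.inr hs)
    exact hc.tendsto.comp (tendsto_const_nhds.prodMk_nhds hu)
  have hle : ∀ n, ‖cfc (fun x : ℝ => x ^ u n) A * cfc (fun x : ℝ => x ^ u n) B‖
      ≤ ‖A * B‖ ^ u n := by
    intro n
    have hd : ‖cfc (fun x : ℝ => x ^ u n) A * cfc (fun x : ℝ => x ^ u n) B‖₊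
        ≤ ‖A * B‖₊ ^ u n := myCordes_dyadic A B hA hB n (k n) (hkle n)
    calc ‖cfc (fun x : ℝ => x ^ u n) A * cfc (fun x : ℝ => x ^ u n) B‖
        = ((‖cfc (fun x : ℝ => x ^ u n) A * cfc (fun x : ℝ => x ^ u n) B‖₊ : ℝ≥0) : ℝ) :=
          (coe_nnnorm _).symm
      _ ≤ ((‖A * B‖₊ ^ u n : ℝ≥0) : ℝ) := NNReal.coe_le_coe.mpr hd
      _ = ‖A * B‖ ^ u n := by rw [NNReal.coe_rpow, coe_nnnorm]
  exact le_of_tendsto_of_tendsto' hLHS hRHS hle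
end
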